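/- Let τ < T be real numbers and C > 0. Then there exists C₁ > 0, depending only on τ, T and C, with the following property: for every n ≥ 1, every choice of knots τ = t_0 < t_1 < … < t_n = T and values x_0, …, x_n ∈ ℝ satisfying (max_i |x_i|) · (min_i (t_{i+1} − t_i))^{-3} < C, any natural cubic spline X through this data satisfies sup_{[τ,T]} |X| + sup_{[τ,T]} |X'| + sup_{[τ,T]} |X''| < C₁. -/

import Mathlib

set_option maxHeartbeats 4000000

open Set Finset Topology Filter

section SplineAux

lemma affine_abs_le {a b u v s : ℝ} (hs : u ≤ s) (hsv : s ≤ v) :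
    |a + b * s| ≤ max |a + b * u| |a + b * v| := by
  rcases le_total 0 b with hb | hb
  · rw [abs_le]
    constructor
    · have h1 := neg_abs_le (a + b * u)
      have h2 := le_max_left |a + b * u| |a + b * v|
      have h3 := mul_le_mul_of_nonneg_left hs hb
      linarith
    · have h1 := le_abs_self (a + b * v)
      have h2 := le_max_right |a + b * u| |a + b * v|
      have h3 := mul_le_mul_of_nonneg_left hsv hb
      linarith
  · rw [abs_le]
    constructor
    · have h1 := neg_abs_le (a + b * v)
      have h2 := le_max_right |a + b * u| |a + b * v|
      have h3 := mul_le_mul_of_nonpos_left hsv hb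
      linarith
    · have h1 := le_abs_self (a + b * u)
      have h2 := le_max_left |a + b * u| |a + b * v|
      have h3 := mul_le_mul_of_nonpos_left hs hb
      linarith

lemma t_mono {n : ℕ} {t : ℕ → ℝ} (ht : ∀ i < n, t i < t (i + 1)) :
    ∀ i j, i ≤ j → j ≤ n → t i ≤ t j := by
  intro i j hij hjn
  induction j with
  | zero => obtain rfl : i = 0 := Nat.le_zero.1 hij; exact le_rfl
  | succ k ih =>
    rcases Nat.lt_succ_iff_lt_or_eq.mp (Nat.lt_succ_of_le hij) with h | rfl
    · exact (ih (Nat.lt_succ_iff.1 h) (le_of_lt hjn)).trans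
        (ht k (Nat.lt_of_lt_of_le (Nat.lt_succ_self k) hjn)).le
    · exact le_rfl

lemma covering : ∀ n : ℕ, 1 ≤ n → ∀ (t : ℕ → ℝ) (s : ℝ), (∀ i < n, t i < t (i + 1)) →
    t 0 ≤ s → s ≤ t n → ∃ i, i < n ∧ t i ≤ s ∧ s ≤ t (i + 1) := by
  intro n
  induction n with
  | zero => omega
  | succ m ih =>
    intro _ t s ht h0 h1
    by_cases hm : m = 0
    · subst hm; exact ⟨0, Nat.lt_succ_self 0, h0, h1⟩
    · by_cases hs : s ≤ t m
      · obtain ⟨i, hi, h⟩ := ih (Nat.one_le_iff_ne_zero.2 hm) t s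
          (fun i hi => ht i (hi.trans (Nat.lt_succ_self m))) h0 hs
        exact ⟨i, hi.trans (Nat.lt_succ_self m), h⟩
      · exact ⟨m, Nat.lt_succ_self m, (not_le.1 hs).le, h1⟩


lemma eqOn_Icc_of_eqOn_Ioo {f g : ℝ → ℝ} {u v : ℝ} (huv : u < v)
    (hf : ContinuousOn f (Set.Icc u v)) (hg : ContinuousOn g (Set.Icc u v))
    (h : ∀ s ∈ Set.Ioo u v, f s = g s) : ∀ s ∈ Set.Icc u v, f s = g s := by
  intro s hs
  have hcl : s ∈ closure (Set.Ioo u v) := by rwa [closure_Ioo huv.ne]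
  have hne : (𝓝[Set.Ioo u v] s).NeBot := mem_closure_iff_nhdsWithin_neBot.1 hcl
  have h1 : Filter.Tendsto f (𝓝[Set.Ioo u v] s) (𝓝 (f s)) :=
    (hf s hs).mono Set.Ioo_subset_Icc_self
  have h2 : Filter.Tendsto g (𝓝[Set.Ioo u v] s) (𝓝 (g s)) :=
    (hg s hs).mono Set.Ioo_subset_Icc_self
  have h3 : Filter.Tendsto f (𝓝[Set.Ioo u v] s) (𝓝 (g s)) :=
    h2.congr' (by filter_upwards [self_mem_nhdsWithin] with y hy using (h y hy).symm)
  exact tendsto_nhds_unique h1 h3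

lemma cubic_hasDerivAt (c0 c1 c2 c3 s : ℝ) :
    HasDerivAt (fun y : ℝ => c0 + c1 * y + c2 * y ^ 2 + c3 * y ^ 3)
      (c1 + 2 * c2 * s + 3 * c3 * s ^ 2) s := by
  have h : HasDerivAt (fun y : ℝ => c0 + c1 * y + c2 * y ^ 2 + c3 * y ^ 3)
      (0 + c1 * 1 + c2 * (↑2 * s ^ 1) + c3 * (↑3 * s ^ 2)) s := by
    exact (((hasDerivAt_const s c0).add ((hasDerivAt_id s).const_mul c1)).add
      ((hasDerivAt_pow 2 s).const_mul c2)).add ((hasDerivAt_pow 3 s).const_mul c3)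
  convert h using 1
  push_cast
  ring

lemma quadratic_hasDerivAt (c1 c2 c3 s : ℝ) :
    HasDerivAt (fun y : ℝ => c1 + 2 * c2 * y + 3 * c3 * y ^ 2)
      (2 * c2 + 6 * c3 * s) s := by
  have h : HasDerivAt (fun y : ℝ => c1 + 2 * c2 * y + 3 * c3 * y ^ 2)
      (0 + 2 * c2 * 1 + 3 * c3 * (↑2 * s ^ 1)) s :=
    ((hasDerivAt_const s c1).add ((hasDerivAt_id s).const_mul (2 * c2))).add
      ((hasDerivAt_pow 2 s).const_mul (3 * c3))
  convert h using 1
  push_cast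
  ring

lemma spline_piece {τ T : ℝ} (hτT : τ < T) {X : ℝ → ℝ}
    (hX : ContDiffOn ℝ 2 X (Set.Icc τ T))
    {u v c0 c1 c2 c3 : ℝ} (hu : τ ≤ u) (huv : u < v) (hv : v ≤ T)
    (hf : ∀ s ∈ Set.Icc u v, X s = c0 + c1 * s + c2 * s ^ 2 + c3 * s ^ 3) :
    (∀ s ∈ Set.Icc u v, derivWithin X (Set.Icc τ T) s = c1 + 2 * c2 * s + 3 * c3 * s ^ 2) ∧
    (∀ s ∈ Set.Icc u v, iteratedDerivWithin 2 X (Set.Icc τ T) s = 2 * c2 + 6 * c3 * s) := by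
  have hS : UniqueDiffOn ℝ (Set.Icc τ T) := uniqueDiffOn_Icc hτT
  have hsub : Set.Icc u v ⊆ Set.Icc τ T := Set.Icc_subset_Icc hu hv
  have hnhds : ∀ s ∈ Set.Ioo u v, Set.Icc τ T ∈ 𝓝 s := fun s hs =>
    Filter.mem_of_superset (isOpen_Ioo.mem_nhds hs) (Set.Ioo_subset_Icc_self.trans hsub)
  have hDcont : ContinuousOn (derivWithin X (Set.Icc τ T)) (Set.Icc τ T) :=
    hX.continuousOn_derivWithin hS one_le_two
  have hD2cont : ContinuousOn (iteratedDerivWithin 2 X (Set.Icc τ T)) (Set.Icc τ T) :=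
    hX.continuousOn_iteratedDerivWithin (le_refl _) hS
  have hDopen : ∀ s ∈ Set.Ioo u v,
      derivWithin X (Set.Icc τ T) s = c1 + 2 * c2 * s + 3 * c3 * s ^ 2 := by
    intro s hs
    rw [derivWithin_of_mem_nhds (hnhds s hs)]
    have heq : X =ᶠ[𝓝 s] fun y => c0 + c1 * y + c2 * y ^ 2 + c3 * y ^ 3 := by
      filter_upwards [isOpen_Ioo.mem_nhds hs] with y hy
      exact hf y (Set.Ioo_subset_Icc_self hy)
    rw [heq.deriv_eq]
    exact (cubic_hasDerivAt c0 c1 c2 c3 s).deriv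
  have hD : ∀ s ∈ Set.Icc u v,
      derivWithin X (Set.Icc τ T) s = c1 + 2 * c2 * s + 3 * c3 * s ^ 2 :=
    eqOn_Icc_of_eqOn_Ioo huv (hDcont.mono hsub)
      (Continuous.continuousOn (by continuity)) hDopen
  refine ⟨hD, ?_⟩
  have hD2open : ∀ s ∈ Set.Ioo u v,
      iteratedDerivWithin 2 X (Set.Icc τ T) s = 2 * c2 + 6 * c3 * s := by
    intro s hs
    rw [iteratedDerivWithin_succ,
      derivWithin_of_mem_nhds (hnhds s hs)]
    have heq : iteratedDerivWithin 1 X (Set.Icc τ T) =ᶠ[𝓝 s]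
        fun y => c1 + 2 * c2 * y + 3 * c3 * y ^ 2 := by
      filter_upwards [isOpen_Ioo.mem_nhds hs] with y hy
      rw [iteratedDerivWithin_one]
      exact hD y (Set.Ioo_subset_Icc_self hy)
    rw [heq.deriv_eq]
    exact (quadratic_hasDerivAt c1 c2 c3 s).deriv
  exact eqOn_Icc_of_eqOn_Ioo huv (hD2cont.mono hsub)
    (Continuous.continuousOn (by continuity)) hD2open

end SplineAux

/-- `X` is a natural cubic spline through the data `(t_i, x_i)_{i ≤ n}`. -/
def IsNaturalCubicSpline (n : ℕ) (t x : ℕ → ℝ) (X : ℝ → ℝ) : Prop :=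
  ContDiffOn ℝ 2 X (Set.Icc (t 0) (t n)) ∧
  (∀ i < n, ∃ p : Polynomial ℝ, p.degree ≤ 3 ∧
    ∀ s ∈ Set.Icc (t i) (t (i + 1)), X s = p.eval s) ∧
  (∀ i ≤ n, X (t i) = x i) ∧
  iteratedDerivWithin 2 X (Set.Icc (t 0) (t n)) (t 0) = 0 ∧
  iteratedDerivWithin 2 X (Set.Icc (t 0) (t n)) (t n) = 0

/-- Uniform `C²` bound for natural cubic splines on `[τ, T]` whose data satisfy
`(max_i |x_i|) (min_i (t_{i+1} - t_i))⁻³ < C`: there is `C₁ > 0` depending only on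
`τ`, `T`, `C` bounding `‖X‖_∞ + ‖X'‖_∞ + ‖X''‖_∞`. -/
theorem stmt_8 (τ T C : ℝ) (hτT : τ < T) (hC : 0 < C) :
    ∃ C₁ : ℝ, 0 < C₁ ∧
      ∀ (n : ℕ) (hn : 1 ≤ n) (t x : ℕ → ℝ),
        t 0 = τ → t n = T → (∀ i < n, t i < t (i + 1)) →
        ((Finset.range (n + 1)).sup' ⟨0, Finset.mem_range.mpr (Nat.succ_pos n)⟩
            (fun i => |x i|))
          * (((Finset.range n).inf' ⟨0, Finset.mem_range.mpr hn⟩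
              (fun i => t (i + 1) - t i))⁻¹) ^ 3 < C →
        ∀ X : ℝ → ℝ, IsNaturalCubicSpline n t x X →
          (⨆ s : Set.Icc τ T, |X s|)
          + (⨆ s : Set.Icc τ T, |derivWithin X (Set.Icc τ T) s|)
          + (⨆ s : Set.Icc τ T, |iteratedDerivWithin 2 X (Set.Icc τ T) s|) < C₁ := by
  have hL0 : 0 < T - τ := sub_pos.2 hτT
  set L : ℝ := T - τ with hLdef
  refine ⟨21 * C * L ^ 3 + 20 * C * L ^ 2 + 12 * C * L + 1, by nlinarith [mul_pos hC (pow_pos hL0 3), mul_pos hC (pow_pos hL0 2), mul_pos hC hL0], ?_⟩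
  intro n hn t x ht0 htn htlt hsmall X hspline
  obtain ⟨hX2, hpoly, hval, hbc0, hbcn⟩ := hspline
  rw [ht0, htn] at hX2 hbc0 hbcn
  haveI : Nonempty (Set.Icc τ T) := ⟨⟨τ, le_refl τ, hτT.le⟩⟩
  set A := ((Finset.range (n + 1)).sup' ⟨0, Finset.mem_range.mpr (Nat.succ_pos n)⟩
      (fun i => |x i|)) with hAdef
  set h := ((Finset.range n).inf' ⟨0, Finset.mem_range.mpr hn⟩
      (fun i => t (i + 1) - t i)) with hhdef
  -- basic facts
  have hmono := t_mono htlt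
  have hh_le : ∀ i < n, h ≤ t (i + 1) - t i := by
    intro i hi
    rw [hhdef]
    exact Finset.inf'_le (fun i => t (i + 1) - t i) (Finset.mem_range.2 hi)
  have hhpos : 0 < h := by
    rw [hhdef]
    exact (Finset.lt_inf'_iff _).2 fun i hi => sub_pos.2 (htlt i (Finset.mem_range.1 hi))
  have hA_ge : ∀ i ≤ n, |x i| ≤ A := by
    intro i hi
    rw [hAdef]
    exact Finset.le_sup' (fun i => |x i|) (Finset.mem_range.2 (Nat.lt_succ_of_le hi))
  have hA0 : 0 ≤ A := (abs_nonneg _).trans (hA_ge 0 (Nat.zero_le n))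
  have hgapL : ∀ i < n, t (i + 1) - t i ≤ L := by
    intro i hi
    have h1 : τ ≤ t i := ht0 ▸ hmono 0 i (Nat.zero_le i) (le_of_lt hi)
    have h2 : t (i + 1) ≤ T := htn ▸ hmono (i + 1) n hi (le_refl n)
    simp only [hLdef]; linarith
  have hhL : h ≤ L := (hh_le 0 hn).trans (hgapL 0 hn)
  have hAC : A ≤ C * h ^ 3 := by
    have h3 : (0:ℝ) < h ^ 3 := pow_pos hhpos 3
    rw [inv_pow, ← div_eq_mul_inv] at hsmall
    exact ((div_lt_iff₀ h3).1 hsmall).le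
  clear_value A h L
  -- coefficients
  have hco : ∀ i, ∃ c : Fin 4 → ℝ, i < n → ∀ s ∈ Set.Icc (t i) (t (i + 1)),
      X s = c 0 + c 1 * s + c 2 * s ^ 2 + c 3 * s ^ 3 := by
    intro i
    by_cases hi : i < n
    · obtain ⟨p, hdeg, hp⟩ := hpoly i hi
      refine ⟨![p.coeff 0, p.coeff 1, p.coeff 2, p.coeff 3], fun _ s hs => ?_⟩
      rw [hp s hs, Polynomial.eval_eq_sum_range' (n := 4)
        (lt_of_le_of_lt (Polynomial.natDegree_le_iff_degree_le.2 hdeg) (by norm_num))]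
      simp [Finset.sum_range_succ]
    · exact ⟨0, fun hc => absurd hc hi⟩
  choose c hc using hco
  have hfacts : ∀ i < n,
      (∀ s ∈ Set.Icc (t i) (t (i + 1)),
        derivWithin X (Set.Icc τ T) s = c i 1 + 2 * c i 2 * s + 3 * c i 3 * s ^ 2) ∧
      (∀ s ∈ Set.Icc (t i) (t (i + 1)),
        iteratedDerivWithin 2 X (Set.Icc τ T) s = 2 * c i 2 + 6 * c i 3 * s) := by
    intro i hi
    exact spline_piece hτT hX2 (ht0 ▸ hmono 0 i (Nat.zero_le i) (le_of_lt hi)) (htlt i hi)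
      (htn ▸ hmono (i + 1) n hi (le_refl n)) (hc i hi)
  set M : ℕ → ℝ := fun i => iteratedDerivWithin 2 X (Set.Icc τ T) (t i) with hMdef
  have hM0 : M 0 = 0 := by show iteratedDerivWithin 2 X _ (t 0) = 0; rw [ht0]; exact hbc0
  have hMn : M n = 0 := by show iteratedDerivWithin 2 X _ (t n) = 0; rw [htn]; exact hbcn
  have hMi : ∀ i < n, M i = 2 * c i 2 + 6 * c i 3 * t i := fun i hi =>
    (hfacts i hi).2 (t i) ⟨le_refl _, (htlt i hi).le⟩
  have hMi1 : ∀ i < n, M (i + 1) = 2 * c i 2 + 6 * c i 3 * t (i + 1) := fun i hi =>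
    (hfacts i hi).2 (t (i + 1)) ⟨(htlt i hi).le, le_refl _⟩
  have hxi : ∀ i < n, c i 0 + c i 1 * t i + c i 2 * (t i) ^ 2 + c i 3 * (t i) ^ 3 = x i := by
    intro i hi
    rw [← hc i hi (t i) ⟨le_refl _, (htlt i hi).le⟩]
    exact hval i (le_of_lt hi)
  have hxi1 : ∀ i < n, c i 0 + c i 1 * t (i + 1) + c i 2 * (t (i + 1)) ^ 2
      + c i 3 * (t (i + 1)) ^ 3 = x (i + 1) := by
    intro i hi
    rw [← hc i hi (t (i + 1)) ⟨(htlt i hi).le, le_refl _⟩]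
    exact hval (i + 1) hi
  -- endpoint derivative formulas
  have hDL : ∀ i < n, derivWithin X (Set.Icc τ T) (t i)
      = (x (i + 1) - x i) / (t (i + 1) - t i) - (t (i + 1) - t i) * (2 * M i + M (i + 1)) / 6 := by
    intro i hi
    rw [(hfacts i hi).1 (t i) ⟨le_refl _, (htlt i hi).le⟩, hMi i hi, hMi1 i hi,
      ← hxi i hi, ← hxi1 i hi]
    have hne : t (i + 1) - t i ≠ 0 := ne_of_gt (sub_pos.2 (htlt i hi))
    field_simp
    ring
  have hDR : ∀ i < n, derivWithin X (Set.Icc τ T) (t (i + 1))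
      = (x (i + 1) - x i) / (t (i + 1) - t i) + (t (i + 1) - t i) * (M i + 2 * M (i + 1)) / 6 := by
    intro i hi
    rw [(hfacts i hi).1 (t (i + 1)) ⟨(htlt i hi).le, le_refl _⟩, hMi i hi, hMi1 i hi,
      ← hxi i hi, ← hxi1 i hi]
    have hne : t (i + 1) - t i ≠ 0 := ne_of_gt (sub_pos.2 (htlt i hi))
    field_simp
    ring
  -- max of |M|
  set B := ((Finset.range (n + 1)).sup' ⟨0, Finset.mem_range.mpr (Nat.succ_pos n)⟩
      (fun i => |M i|)) with hBdef
  have hB_ge : ∀ i ≤ n, |M i| ≤ B := by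
    intro i hi
    rw [hBdef]
    exact Finset.le_sup' (fun i => |M i|) (Finset.mem_range.2 (Nat.lt_succ_of_le hi))
  have hB0 : 0 ≤ B := (abs_nonneg _).trans (hB_ge 0 (Nat.zero_le n))
  clear_value B
  have hd_abs : ∀ i < n, |(x (i + 1) - x i) / (t (i + 1) - t i)| ≤ 2 * A / h := by
    intro i hi
    rw [abs_div, abs_of_pos (sub_pos.2 (htlt i hi))]
    apply div_le_div₀ (by linarith)
    · have h1 := hA_ge i (le_of_lt hi)
      have h2 := hA_ge (i + 1) hi
      calc |x (i + 1) - x i| ≤ |x (i + 1)| + |x i| := abs_sub _ _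
        _ ≤ 2 * A := by linarith
    · exact hhpos
    · exact hh_le i hi
  have hBb : B * h ^ 2 ≤ 12 * A := by
    obtain ⟨i, hi_mem, hiB⟩ := Finset.exists_mem_eq_sup'
      (⟨0, Finset.mem_range.mpr (Nat.succ_pos n)⟩ : (Finset.range (n + 1)).Nonempty)
      (fun i => |M i|)
    rw [← hBdef] at hiB
    have hin : i ≤ n := Nat.lt_succ_iff.1 (Finset.mem_range.1 hi_mem)
    rcases Nat.eq_zero_or_pos i with rfl | hipos
    · rw [hiB, hM0, abs_zero, zero_mul]
      linarith
    rcases eq_or_lt_of_le hin with rfl | hilt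
    · rw [hiB, hMn, abs_zero, zero_mul]
      linarith
    obtain ⟨j, rfl⟩ : ∃ j, i = j + 1 := ⟨i - 1, by omega⟩
    have hj : j < n := by omega
    have hj1 : j + 1 < n := hilt
    have heq := (hDR j hj).symm.trans (hDL (j + 1) hj1)
    set d1 := (x (j + 1) - x j) / (t (j + 1) - t j) with hd1
    set d2 := (x (j + 2) - x (j + 1)) / (t (j + 2) - t (j + 1)) with hd2
    set h1 := t (j + 1) - t j with hh1
    set h2 := t (j + 2) - t (j + 1) with hh2
    have hh1pos : 0 < h1 := sub_pos.2 (htlt j hj)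
    have hh2pos : 0 < h2 := sub_pos.2 (htlt (j + 1) hj1)
    have key : 2 * (h1 + h2) * M (j + 1) = 6 * (d2 - d1) - h1 * M j - h2 * M (j + 2) := by
      linear_combination 6 * heq
    have habs1 : |M j| ≤ |M (j + 1)| := hiB ▸ hB_ge j (by omega)
    have habs2 : |M (j + 2)| ≤ |M (j + 1)| := hiB ▸ hB_ge (j + 2) (by omega)
    have step1 : 2 * (h1 + h2) * |M (j + 1)| ≤ 6 * |d1| + 6 * |d2| + h1 * |M j| + h2 * |M (j + 2)| := by
      have e1 : |2 * (h1 + h2) * M (j + 1)| = 2 * (h1 + h2) * |M (j + 1)| := by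
        rw [abs_mul, abs_of_pos (by linarith : (0:ℝ) < 2 * (h1 + h2))]
      rw [← e1, key]
      calc |6 * (d2 - d1) - h1 * M j - h2 * M (j + 2)|
          ≤ |6 * (d2 - d1) - h1 * M j| + |h2 * M (j + 2)| := abs_sub _ _
        _ ≤ |6 * (d2 - d1)| + |h1 * M j| + |h2 * M (j + 2)| := by
            have := abs_sub (6 * (d2 - d1)) (h1 * M j)
            linarith
        _ ≤ 6 * |d1| + 6 * |d2| + h1 * |M j| + h2 * |M (j + 2)| := by
            rw [abs_mul, abs_mul, abs_mul, abs_of_pos hh1pos, abs_of_pos hh2pos,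
              abs_of_nonneg (by norm_num : (0:ℝ) ≤ 6)]
            have := abs_sub d2 d1
            nlinarith [abs_nonneg d1, abs_nonneg d2]
    have step2 : (h1 + h2) * |M (j + 1)| ≤ 24 * A / h := by
      have m1 := mul_le_mul_of_nonneg_left habs1 hh1pos.le
      have m2 := mul_le_mul_of_nonneg_left habs2 hh2pos.le
      have hd1b := hd_abs j hj
      have hd2b := hd_abs (j + 1) hj1
      rw [← hd1] at hd1b
      rw [← hd2] at hd2b
      have : h1 * |M (j + 1)| + h2 * |M (j + 1)| ≤ 6 * |d1| + 6 * |d2| := by linarith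
      have h24 : 6 * |d1| + 6 * |d2| ≤ 24 * A / h := by
        rw [div_eq_mul_inv] at hd1b hd2b ⊢
        linarith
      nlinarith [this, h24]
    have step3 : 2 * h * |M (j + 1)| ≤ 24 * A / h := by
      have hm0 : 0 ≤ |M (j + 1)| := abs_nonneg _
      have hle1 : h ≤ h1 := hh1 ▸ hh_le j hj
      have hle2 : h ≤ h2 := hh2 ▸ hh_le (j + 1) hj1
      nlinarith [hle1, hle2, step2]
    rw [hiB]
    have := mul_le_mul_of_nonneg_right step3 hhpos.le
    rw [div_mul_cancel₀ _ (ne_of_gt hhpos)] at this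
    nlinarith
  -- pointwise second-derivative bound
  have hD2b : ∀ s ∈ Set.Icc τ T, |iteratedDerivWithin 2 X (Set.Icc τ T) s| ≤ B := by
    intro s hs
    obtain ⟨i, hi, hu, hv⟩ := covering n hn t s htlt (by rw [ht0]; exact hs.1)
      (by rw [htn]; exact hs.2)
    rw [(hfacts i hi).2 s ⟨hu, hv⟩]
    have hb := affine_abs_le (a := 2 * c i 2) (b := 6 * c i 3) hu hv
    rw [show 2 * c i 2 + 6 * c i 3 * t i = M i from (hMi i hi).symm,
      show 2 * c i 2 + 6 * c i 3 * t (i + 1) = M (i + 1) from (hMi1 i hi).symm] at hb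
    exact hb.trans (max_le (hB_ge i (le_of_lt hi)) (hB_ge (i + 1) hi))
  -- numeric consequences
  have hACL : A ≤ C * L ^ 3 := by nlinarith [pow_le_pow_left₀ hhpos.le hhL 3]
  have hAh : 2 * A / h ≤ 2 * C * L ^ 2 := by
    rw [div_le_iff₀ hhpos]
    nlinarith [pow_le_pow_left₀ hhpos.le hhL 2, mul_pos hC (pow_pos hhpos 2)]
  have hBCL : B ≤ 12 * C * L := by
    have h2 : (0:ℝ) < h ^ 2 := pow_pos hhpos 2
    have : B * h ^ 2 ≤ (12 * C * h) * h ^ 2 := by nlinarith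
    have hBh : B ≤ 12 * C * h := le_of_mul_le_mul_right this h2
    nlinarith
  have hLB : L * B ≤ 12 * C * L ^ 2 := by nlinarith
  -- pointwise first-derivative bound
  have hDb : ∀ s ∈ Set.Icc τ T, |derivWithin X (Set.Icc τ T) s| ≤ 20 * C * L ^ 2 := by
    intro s hs
    obtain ⟨i, hi, hu, hv⟩ := covering n hn t s htlt (by rw [ht0]; exact hs.1)
      (by rw [htn]; exact hs.2)
    rw [(hfacts i hi).1 s ⟨hu, hv⟩]
    have hgappos : (0:ℝ) < t (i + 1) - t i := sub_pos.2 (htlt i hi)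
    have hgapL' := hgapL i hi
    have hDu : c i 1 + 2 * c i 2 * t i + 3 * c i 3 * t i ^ 2
        = (x (i + 1) - x i) / (t (i + 1) - t i)
          - (t (i + 1) - t i) * (2 * M i + M (i + 1)) / 6 := by
      rw [← (hfacts i hi).1 (t i) ⟨le_refl _, (htlt i hi).le⟩]
      exact hDL i hi
    have hw : |(2 * c i 2 + 6 * c i 3 * t i) + (2 * c i 2 + 6 * c i 3 * s)| ≤ 2 * B := by
      have h1 : |2 * c i 2 + 6 * c i 3 * t i| ≤ B := by
        rw [show 2 * c i 2 + 6 * c i 3 * t i = M i from (hMi i hi).symm]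
        exact hB_ge i (le_of_lt hi)
      have h2 : |2 * c i 2 + 6 * c i 3 * s| ≤ B := by
        have := hD2b s hs
        rwa [(hfacts i hi).2 s ⟨hu, hv⟩] at this
      calc |(2 * c i 2 + 6 * c i 3 * t i) + (2 * c i 2 + 6 * c i 3 * s)|
          ≤ |2 * c i 2 + 6 * c i 3 * t i| + |2 * c i 2 + 6 * c i 3 * s| := abs_add_le _ _
        _ ≤ 2 * B := by linarith
    have hdiff : |(c i 1 + 2 * c i 2 * s + 3 * c i 3 * s ^ 2)
        - (c i 1 + 2 * c i 2 * t i + 3 * c i 3 * t i ^ 2)| ≤ L * B := by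
      have e3 : (c i 1 + 2 * c i 2 * s + 3 * c i 3 * s ^ 2)
          - (c i 1 + 2 * c i 2 * t i + 3 * c i 3 * t i ^ 2)
          = (s - t i) / 2 * ((2 * c i 2 + 6 * c i 3 * t i) + (2 * c i 2 + 6 * c i 3 * s)) := by
        ring
      rw [e3, abs_mul, abs_of_nonneg (by linarith : (0:ℝ) ≤ (s - t i) / 2)]
      have hsu : s - t i ≤ L := by linarith
      nlinarith [abs_nonneg ((2 * c i 2 + 6 * c i 3 * t i) + (2 * c i 2 + 6 * c i 3 * s)), hB0]
    have hq : |(t (i + 1) - t i) * (2 * M i + M (i + 1)) / 6| ≤ L * (3 * B) / 6 := by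
      rw [abs_div, abs_mul, abs_of_pos hgappos, show |(6:ℝ)| = 6 by norm_num]
      gcongr
      calc |2 * M i + M (i + 1)| ≤ |2 * M i| + |M (i + 1)| := abs_add_le _ _
        _ ≤ 3 * B := by
            rw [abs_mul, show |(2:ℝ)| = 2 by norm_num]
            have := hB_ge i (le_of_lt hi)
            have := hB_ge (i + 1) hi
            linarith
    have hgu : |c i 1 + 2 * c i 2 * t i + 3 * c i 3 * t i ^ 2| ≤ 2 * A / h + L * (3 * B) / 6 := by
      rw [hDu]
      calc |(x (i + 1) - x i) / (t (i + 1) - t i)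
            - (t (i + 1) - t i) * (2 * M i + M (i + 1)) / 6|
          ≤ |(x (i + 1) - x i) / (t (i + 1) - t i)|
            + |(t (i + 1) - t i) * (2 * M i + M (i + 1)) / 6| := abs_sub _ _
        _ ≤ 2 * A / h + L * (3 * B) / 6 := add_le_add (hd_abs i hi) hq
    calc |c i 1 + 2 * c i 2 * s + 3 * c i 3 * s ^ 2|
        = |(c i 1 + 2 * c i 2 * t i + 3 * c i 3 * t i ^ 2)
          + ((c i 1 + 2 * c i 2 * s + 3 * c i 3 * s ^ 2)
            - (c i 1 + 2 * c i 2 * t i + 3 * c i 3 * t i ^ 2))| := by ring_nf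
      _ ≤ |c i 1 + 2 * c i 2 * t i + 3 * c i 3 * t i ^ 2|
          + |(c i 1 + 2 * c i 2 * s + 3 * c i 3 * s ^ 2)
            - (c i 1 + 2 * c i 2 * t i + 3 * c i 3 * t i ^ 2)| := abs_add_le _ _
      _ ≤ 20 * C * L ^ 2 := by nlinarith [hgu, hdiff, hAh, hLB]
  -- pointwise value bound
  have hXb : ∀ s ∈ Set.Icc τ T, |X s| ≤ 21 * C * L ^ 3 := by
    intro s hs
    obtain ⟨i, hi, hu, hv⟩ := covering n hn t s htlt (by rw [ht0]; exact hs.1)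
      (by rw [htn]; exact hs.2)
    rw [hc i hi s ⟨hu, hv⟩]
    have hgapL' := hgapL i hi
    have hm1 : t i ≤ (t i + s) / 2 := by linarith
    have hm2 : (t i + s) / 2 ≤ t (i + 1) := by linarith
    have hg : ∀ y, t i ≤ y → y ≤ t (i + 1) →
        |c i 1 + 2 * c i 2 * y + 3 * c i 3 * y ^ 2| ≤ 20 * C * L ^ 2 := by
      intro y hy1 hy2
      have hyS : y ∈ Set.Icc τ T :=
        ⟨(ht0 ▸ hmono 0 i (Nat.zero_le i) (le_of_lt hi)).trans hy1,
          hy2.trans (htn ▸ hmono (i + 1) n hi (le_refl n))⟩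
      have := hDb y hyS
      rwa [(hfacts i hi).1 y ⟨hy1, hy2⟩] at this
    have hgs := hg s hu hv
    have hgu := hg (t i) (le_refl _) (htlt i hi).le
    have hgm := hg ((t i + s) / 2) hm1 hm2
    obtain ⟨W, hWdef⟩ : ∃ W : ℝ, W = (c i 1 + 2 * c i 2 * t i + 3 * c i 3 * t i ^ 2)
            + 4 * (c i 1 + 2 * c i 2 * ((t i + s) / 2) + 3 * c i 3 * ((t i + s) / 2) ^ 2)
            + (c i 1 + 2 * c i 2 * s + 3 * c i 3 * s ^ 2) := ⟨_, rfl⟩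
    have simpson : c i 0 + c i 1 * s + c i 2 * s ^ 2 + c i 3 * s ^ 3
        = x i + (s - t i) / 6 * W := by
      rw [hWdef, ← hxi i hi]
      ring
    rw [simpson]
    have hW : |W| ≤ 120 * C * L ^ 2 := by
      rw [hWdef]
      have t1 := abs_add_le ((c i 1 + 2 * c i 2 * t i + 3 * c i 3 * t i ^ 2)
            + 4 * (c i 1 + 2 * c i 2 * ((t i + s) / 2) + 3 * c i 3 * ((t i + s) / 2) ^ 2))
            (c i 1 + 2 * c i 2 * s + 3 * c i 3 * s ^ 2)
      have t2 := abs_add_le (c i 1 + 2 * c i 2 * t i + 3 * c i 3 * t i ^ 2)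
            (4 * (c i 1 + 2 * c i 2 * ((t i + s) / 2) + 3 * c i 3 * ((t i + s) / 2) ^ 2))
      have t3 : |4 * (c i 1 + 2 * c i 2 * ((t i + s) / 2) + 3 * c i 3 * ((t i + s) / 2) ^ 2)|
          = 4 * |c i 1 + 2 * c i 2 * ((t i + s) / 2) + 3 * c i 3 * ((t i + s) / 2) ^ 2| := by
        rw [abs_mul, show |(4:ℝ)| = 4 by norm_num]
      rw [t3] at t2
      linarith
    have hxA := hA_ge i (le_of_lt hi)
    have hst : s - t i ≤ L := by linarith
    have habs : |x i + (s - t i) / 6 * W| ≤ |x i| + (s - t i) / 6 * |W| := by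
      have h1 := abs_add_le (x i) ((s - t i) / 6 * W)
      rw [abs_mul, abs_of_nonneg (by linarith : (0:ℝ) ≤ (s - t i) / 6)] at h1
      exact h1
    have hCL2 : 0 ≤ C * L ^ 2 := by positivity
    refine habs.trans ?_
    have e5 : (s - t i) / 6 * |W| ≤ L / 6 * (120 * C * L ^ 2) :=
      mul_le_mul (by linarith) hW (abs_nonneg W) (by linarith)
    linarith [hxA, hACL, e5]
  -- conclusion
  have hsup1 : (⨆ s : Set.Icc τ T, |X s|) ≤ 21 * C * L ^ 3 :=
    ciSup_le (fun s => hXb s s.2)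
  have hsup2 : (⨆ s : Set.Icc τ T, |derivWithin X (Set.Icc τ T) s|) ≤ 20 * C * L ^ 2 :=
    ciSup_le (fun s => hDb s s.2)
  have hsup3 : (⨆ s : Set.Icc τ T, |iteratedDerivWithin 2 X (Set.Icc τ T) s|) ≤ 12 * C * L :=
    ciSup_le (fun s => (hD2b s s.2).trans hBCL)
  linarith
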